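/- Let A₁, …, A_k be linear endomorphisms of an n-dimensional vector space V over a field F such that Aⱼ² = 0 for all j and AᵢAⱼ = AⱼAᵢ for all i, j. Then there exists a basis of V in which all the Aᵢ are simultaneously strictly lower triangular (i.e., lower triangular with all diagonal entries equal to 0). -/

import Mathlib

open Submodule Module

/-- Commuting square-zero endomorphisms of a nontrivial space have a common
nonzero kernel vector. -/
lemma exists_common_kernel_vector {F : Type*} [Field F] {V : Type*} [AddCommGroup V]
    [Module F V] [Nontrivial V] {k : ℕ} (A : Fin k → V →ₗ[F] V)
    (hsq : ∀ j, A j ∘ₗ A j = 0)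
    (hcomm : ∀ i j, A i ∘ₗ A j = A j ∘ₗ A i) :
    ∃ v : V, v ≠ 0 ∧ ∀ j, A j v = 0 := by
  suffices h : ∀ l : List (Fin k), ∃ v : V, v ≠ 0 ∧ ∀ j ∈ l, A j v = 0 by
    obtain ⟨v, hv, h⟩ := h (List.finRange k)
    exact ⟨v, hv, fun j => h j (List.mem_finRange j)⟩
  intro l
  induction l with
  | nil =>
    obtain ⟨v, hv⟩ := exists_ne (0 : V)
    exact ⟨v, hv, by simp⟩
  | cons j l ih =>
    obtain ⟨v, hv, h⟩ := ih
    by_cases hjv : A j v = 0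
    · refine ⟨v, hv, ?_⟩
      intro i hi
      rcases List.mem_cons.mp hi with rfl | hi
      · exact hjv
      · exact h i hi
    · refine ⟨A j v, hjv, ?_⟩
      intro i hi
      rcases List.mem_cons.mp hi with rfl | hi
      · have := congrArg (fun f => f v) (hsq i)
        simpa using this
      · have := congrArg (fun f => f v) (hcomm i j)
        simp only [LinearMap.comp_apply] at this
        rw [this, h i hi, map_zero]

/-- Key auxiliary lemma, proved by strong induction on the dimension. -/
lemma aux_triangular (F : Type*) [Field F] (k : ℕ) :
    ∀ (n : ℕ) (V : Type*) [AddCommGroup V] [Module F V] [FiniteDimensional F V],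
      Module.finrank F V = n → ∀ (A : Fin k → V →ₗ[F] V),
      (∀ j, A j ∘ₗ A j = 0) → (∀ i j, A i ∘ₗ A j = A j ∘ₗ A i) →
      ∃ b : Basis (Fin n) F V, ∀ (j : Fin k) (q : Fin n),
        A j (b q) ∈ Submodule.span F (b '' {p | q < p}) := by
  intro n
  induction n using Nat.strong_induction_on with
  | _ n ih =>
  intro V _ _ _ hdim A hsq hcomm
  rcases Nat.eq_zero_or_pos n with rfl | hn
  · haveI : Subsingleton V := Module.finrank_zero_iff.mp hdim
    exact ⟨Basis.empty V, fun j q => q.elim0⟩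
  haveI : Nontrivial V := by
    apply Module.nontrivial_of_finrank_pos (R := F) (M := V)
    omega
  -- common kernel
  set K : Submodule F V := ⨅ j, LinearMap.ker (A j) with hK
  obtain ⟨v, hv0, hvker⟩ := exists_common_kernel_vector A hsq hcomm
  have hvK : v ∈ K := Submodule.mem_iInf _ |>.mpr fun j => hvker j
  have hKmem : ∀ {x : V}, x ∈ K → ∀ j, A j x = 0 := by
    intro x hx j
    exact (Submodule.mem_iInf _ |>.mp hx) j
  haveI : Nontrivial K := ⟨⟨v, hvK⟩, 0, by simpa using hv0⟩
  set m : ℕ := Module.finrank F K with hm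
  have hmpos : 0 < m := Module.finrank_pos
  -- quotient
  have hle : ∀ j, K ≤ K.comap (A j) := by
    intro j x hx
    simpa [Submodule.mem_comap, hKmem hx j] using K.zero_mem
  set A' : Fin k → (V ⧸ K) →ₗ[F] (V ⧸ K) := fun j => Submodule.mapQ K K (A j) (hle j)
    with hA'
  have hA'mk : ∀ (j : Fin k) (x : V), A' j (K.mkQ x) = K.mkQ (A j x) := by
    intro j x
    rfl
  have hsq' : ∀ j, A' j ∘ₗ A' j = 0 := by
    intro j
    apply Submodule.linearMap_qext
    ext x
    have := congrArg (fun f => f x) (hsq j)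
    simp only [LinearMap.comp_apply, LinearMap.zero_apply] at this ⊢
    simp [Submodule.mkQ_apply] at *
    rw [hA'mk, hA'mk, this]
    simp
  have hcomm' : ∀ i j, A' i ∘ₗ A' j = A' j ∘ₗ A' i := by
    intro i j
    apply Submodule.linearMap_qext
    ext x
    have := congrArg (fun f => f x) (hcomm i j)
    simp only [LinearMap.comp_apply] at this ⊢
    simp [Submodule.mkQ_apply] at *
    rw [hA'mk, hA'mk, hA'mk, hA'mk, this]
  have hrank : Module.finrank F (V ⧸ K) + m = n := by
    rw [hm, Submodule.finrank_quotient_add_finrank, hdim]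
  set n' : ℕ := Module.finrank F (V ⧸ K) with hn'
  have hn'lt : n' < n := by omega
  obtain ⟨c, hc⟩ := ih n' hn'lt (V ⧸ K) rfl A' hsq' hcomm'
  -- complement of K
  obtain ⟨W, hW⟩ := Submodule.exists_isCompl K
  let e : (V ⧸ K) ≃ₗ[F] W := Submodule.quotientEquivOfIsCompl K W hW
  have hmk_e : ∀ x : V ⧸ K, K.mkQ ((e x : V)) = x := fun x =>
    Submodule.mk_quotientEquivOfIsCompl_apply (p := K) (q := W) hW x
  let dK : Basis (Fin m) F K := Module.finBasisOfFinrankEq F K rfl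
  let cW : Basis (Fin n') F W := c.map e
  let bSum : Basis (Fin n' ⊕ Fin m) F V :=
    (cW.prod dK).map (Submodule.prodEquivOfIsCompl W K hW.symm)
  let eIdx : (Fin n' ⊕ Fin m) ≃ Fin n := finSumFinEquiv.trans (finCongr hrank)
  let b : Basis (Fin n) F V := bSum.reindex eIdx
  have hbSum_inl : ∀ i : Fin n', bSum (Sum.inl i) = (e (c i) : V) := by
    intro i
    simp only [bSum, Basis.map_apply, Basis.prod_apply]
    simp [Submodule.coe_prodEquivOfIsCompl', cW, Basis.map_apply]
  have hbSum_inr : ∀ i : Fin m, bSum (Sum.inr i) = (dK i : V) := by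
    intro i
    simp only [bSum, Basis.map_apply, Basis.prod_apply]
    simp [Submodule.coe_prodEquivOfIsCompl']
  have hb_eq : ∀ s, b (eIdx s) = bSum s := by
    intro s
    simp [b, Module.Basis.reindex_apply]
  have hval_inl : ∀ i : Fin n', (eIdx (Sum.inl i) : ℕ) = (i : ℕ) := by
    intro i; simp [eIdx]
  have hval_inr : ∀ i : Fin m, (eIdx (Sum.inr i) : ℕ) = n' + (i : ℕ) := by
    intro i; simp [eIdx]
  refine ⟨b, ?_⟩
  -- K is contained in the span of the late basis vectors
  have hKspan : ∀ q : Fin n, (q : ℕ) < n' →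
      K ≤ Submodule.span F (b '' {p | q < p}) := by
    intro q hq
    have : K = Submodule.span F (Set.range fun i : Fin m => (dK i : V)) := by
      have h1 : Submodule.span F (Set.range fun i : Fin m => (dK i : V)) =
          Submodule.map K.subtype (Submodule.span F (Set.range dK)) := by
        rw [Submodule.map_span]
        congr 1
        ext x
        simp [Set.range_comp]
      rw [h1, dK.span_eq, Submodule.map_top, Submodule.range_subtype]
    rw [this]
    apply Submodule.span_le.mpr
    rintro x ⟨i, rfl⟩
    apply Submodule.subset_span
    refine ⟨eIdx (Sum.inr i), ?_, ?_⟩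
    · simp only [Set.mem_setOf_eq, Fin.lt_def, hval_inr]
      omega
    · rw [hb_eq, hbSum_inr]
  intro j q
  obtain ⟨s, rfl⟩ : ∃ s, q = eIdx s := ⟨eIdx.symm q, (Equiv.apply_symm_apply _ _).symm⟩
  rcases s with i | i
  · -- q in the lifted part
    rw [hb_eq, hbSum_inl]
    set x : V := A j (e (c i) : V) with hx
    have hmkx : K.mkQ x = A' j (c i) := by
      rw [hx, ← hA'mk, hmk_e]
    -- section of the quotient
    let s : (V ⧸ K) →ₗ[F] V := W.subtype ∘ₗ (e : (V ⧸ K) →ₗ[F] W)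
    have hs : ∀ z, K.mkQ (s z) = z := fun z => hmk_e z
    have hy : s (K.mkQ x) ∈ Submodule.span F (b '' {p | eIdx (Sum.inl i) < p}) := by
      have h1 : s (K.mkQ x) ∈ Submodule.span F (s '' (c '' {p | i < p})) := by
        rw [hmkx]
        exact Submodule.apply_mem_span_image_of_mem_span s (hc j i)
      refine Submodule.span_mono ?_ h1
      rintro _ ⟨_, ⟨p, hp, rfl⟩, rfl⟩
      refine ⟨eIdx (Sum.inl p), ?_, ?_⟩
      · simp only [Set.mem_setOf_eq, Fin.lt_def, hval_inl]
        exact hp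
      · rw [hb_eq, hbSum_inl]; rfl
    have hdiff : x - s (K.mkQ x) ∈ K := by
      have : K.mkQ (x - s (K.mkQ x)) = 0 := by rw [map_sub, hs, sub_self]
      rwa [← LinearMap.mem_ker, Submodule.ker_mkQ K] at this
    have := Submodule.add_mem _ (hKspan (eIdx (Sum.inl i)) (by rw [hval_inl]; exact i.isLt) hdiff) hy
    simpa using this
  · -- q in the kernel part: A j (b q) = 0
    rw [hb_eq, hbSum_inr]
    have : A j (dK i : V) = 0 := hKmem (dK i).2 j
    rw [this]
    exact Submodule.zero_mem _

/-- If `A₁, …, A_k` are commuting square-zero endomorphisms of an `n`-dimensional vector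
space `V` over a field `F`, then there is a basis of `V` in which all the `Aⱼ` are
simultaneously strictly lower triangular. -/
theorem simultaneous_strictly_lower_triangular
    (F : Type*) [Field F] (V : Type*) [AddCommGroup V] [Module F V]
    [FiniteDimensional F V] (n k : ℕ) (hdim : Module.finrank F V = n)
    (A : Fin k → V →ₗ[F] V)
    (hsq : ∀ j, A j ∘ₗ A j = 0)
    (hcomm : ∀ i j, A i ∘ₗ A j = A j ∘ₗ A i) :
    ∃ b : Basis (Fin n) F V, ∀ (j : Fin k) (p q : Fin n), p ≤ q →
      LinearMap.toMatrix b b (A j) p q = 0 := by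
  obtain ⟨b, hb⟩ := aux_triangular F k n V hdim A hsq hcomm
  refine ⟨b, ?_⟩
  intro j p q hpq
  rw [LinearMap.toMatrix_apply]
  have hmem := hb j q
  rw [Basis.mem_span_image] at hmem
  by_contra h
  have hp : p ∈ (b.repr (A j (b q))).support := Finsupp.mem_support_iff.mpr h
  have := hmem hp
  simp only [Set.mem_setOf_eq] at this
  exact absurd this (not_lt.mpr hpq)
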